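/- Let u>0, s≥0 and ν₀,ν₁≥0 with ν₀+ν₁=1, and assume u>s or ν₀>0. Let p ∈ [0,1) satisfy u ν₁ p² − (u+s) p + s = 0 if ν₁>0 (p the smaller root), and p = s/(u+s) if ν₁=0. Define π_n = (1−p) p^{n−1} for n ≥ 1. Then for every m ≥ 1 the stationary balance equation holds: π_m·(m s + (m−1) u) = (m−1) s π_{m−1}·𝟙_{m≥2} + (m u ν₁ + u ν₀) π_{m+1} + u ν₀ · Σ_{n=m+2}^∞ π_n. In particular, the geometric distribution with parameter 1−p is invariant for the transition rates q_L(n,n+1)=ns, q_L(n,n−1)=(n−1)uν₁+𝟙_{n>1}uν₀, q_L(n,n−ℓ)=uν₀ for 2≤ℓ<n. -/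

import Mathlib

/-- The geometric distribution `π_n = (1-p) p^{n-1}` on `ℕ = {1,2,...}` satisfies the
stationary balance equations for the line-counting process of the pruned lookdown ASG
(rates `q(n,n+1) = ns`, `q(n,n-1) = (n-1)uν₁ + 𝟙_{n>1}uν₀`, `q(n,n-ℓ) = uν₀` for
`2 ≤ ℓ < n`); the total jump rate from `m` is `ms + (m-1)u`. -/
theorem geometric_stationary_balance
    (u s ν₀ ν₁ p : ℝ) (hu : 0 < u) (hs : 0 ≤ s)
    (hν₀ : 0 ≤ ν₀) (hν₁ : 0 ≤ ν₁) (hν : ν₀ + ν₁ = 1)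
    (hrec : s < u ∨ 0 < ν₀)
    (hp : p ∈ Set.Ico (0 : ℝ) 1)
    (hp1 : 0 < ν₁ →
      (u * ν₁ * p ^ 2 - (u + s) * p + s = 0 ∧
       ∀ x : ℝ, u * ν₁ * x ^ 2 - (u + s) * x + s = 0 → p ≤ x))
    (hp2 : ν₁ = 0 → p = s / (u + s)) :
    ∀ m : ℕ, 1 ≤ m →
      (1 - p) * p ^ (m - 1) * ((m : ℝ) * s + ((m : ℝ) - 1) * u) =
        (if 2 ≤ m then ((m : ℝ) - 1) * s * ((1 - p) * p ^ (m - 2)) else 0)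
        + ((m : ℝ) * u * ν₁ + u * ν₀) * ((1 - p) * p ^ m)
        + u * ν₀ * ∑' k : ℕ, (1 - p) * p ^ (m + 1 + k) := by
  obtain ⟨hp0, hp1'⟩ := hp
  have hne : (1 : ℝ) - p ≠ 0 := by linarith
  -- the quadratic relation holds in all cases
  have hQ : u * ν₁ * p ^ 2 - (u + s) * p + s = 0 := by
    rcases hν₁.eq_or_lt with h | h
    · have hus : u + s ≠ 0 := by positivity
      rw [hp2 h.symm, ← h]
      field_simp
      ring
    · exact (hp1 h).1
  -- the geometric tail sum
  have htsum : ∀ m : ℕ, (∑' k : ℕ, (1 - p) * p ^ (m + 1 + k)) = p ^ (m + 1) := by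
    intro m
    have h1 : ∀ k : ℕ, (1 - p) * p ^ (m + 1 + k) = (1 - p) * p ^ (m + 1) * p ^ k := by
      intro k; rw [pow_add]; ring
    rw [tsum_congr h1, tsum_mul_left, tsum_geometric_of_lt_one hp0 hp1']
    field_simp
  intro m hm
  rw [htsum]
  rcases Nat.lt_or_ge m 2 with h2 | h2
  · interval_cases m
    simp only [if_neg (by norm_num : ¬ (2 : ℕ) ≤ 1)]
    push_cast
    linear_combination hQ - u * p * hν
  · obtain ⟨k, rfl⟩ : ∃ k, m = k + 2 := ⟨m - 2, by omega⟩
    rw [if_pos h2]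
    have e1 : k + 2 - 1 = k + 1 := rfl
    have e2 : k + 2 - 2 = k := rfl
    rw [e1, e2]
    push_cast
    linear_combination ((p - (1 - p) * ((k : ℝ) + 1)) * p ^ k) * hQ
      - u * p ^ 2 * p ^ k * hν
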